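/- For a standard Gaussian random variable g ∼ N(0,1) and t > 0, the expected squared soft-thresholding satisfies E[shrink(g,t)²] ≤ (2/√(2π)) · (1/t) · exp(−t²/2), where shrink(z,t) = z + t for z < −t, 0 for |z| ≤ t, and z − t for z > t. -/

import Mathlib

open MeasureTheory ProbabilityTheory Real Set Filter
open scoped ENNReal NNReal

/-- The soft-thresholding (shrinkage) operator with threshold `t`. -/
noncomputable def shrink (z t : ℝ) : ℝ :=
  if z < -t then z + t else if z ≤ t then 0 else z - t

lemma abs_shrink_le (z t : ℝ) (ht : 0 ≤ t) : |shrink z t| ≤ |z| := by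
  unfold shrink
  split_ifs with h1 h2
  · have hz : z + t ≤ 0 := by linarith
    rw [abs_of_nonpos hz, abs_of_nonpos (by linarith : z ≤ 0)]; linarith
  · simp [abs_nonneg]
  · push_neg at h1 h2
    rw [abs_of_nonneg (by linarith : (0:ℝ) ≤ z - t), abs_of_nonneg (by linarith : (0:ℝ) ≤ z)]
    linarith

lemma measurable_shrink (t : ℝ) : Measurable (fun z => shrink z t) := by
  unfold shrink
  exact Measurable.ite (measurableSet_lt measurable_id measurable_const)
    (measurable_id.add_const t)
    (Measurable.ite (measurableSet_le measurable_id measurable_const) measurable_const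
      (measurable_id.sub_const t))

/-- Derivative of the Gaussian kernel. -/
lemma hasDerivAt_exp_neg_sq (x : ℝ) :
    HasDerivAt (fun y : ℝ => Real.exp (-y ^ 2 / 2)) (Real.exp (-x ^ 2 / 2) * (-x)) x := by
  have h1 : HasDerivAt (fun y : ℝ => -y ^ 2 / 2) (-x) x := by
    have := ((hasDerivAt_pow 2 x).neg).div_const 2
    simpa using this.congr_deriv (by ring)
  simpa [mul_comm] using h1.exp

lemma tendsto_exp_neg_sq : Filter.Tendsto (fun x : ℝ => Real.exp (-x ^ 2 / 2)) atTop (nhds 0) := by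
  have h : Filter.Tendsto (fun x : ℝ => -x ^ 2 / 2) atTop atBot := by
    have := Filter.Tendsto.const_mul_atTop_of_neg (show (-1/2 : ℝ) < 0 by norm_num)
      (tendsto_pow_atTop (two_ne_zero))
    exact this.congr (fun x => by ring)
  exact Real.tendsto_exp_atBot.comp h

lemma tendsto_mul_exp_neg_sq (c : ℝ) :
    Tendsto (fun x : ℝ => (x - c) * Real.exp (-x ^ 2 / 2)) atTop (nhds 0) := by
  have h := rpow_mul_exp_neg_mul_sq_isLittleO_exp_neg (b := 1/2) (by norm_num) 1
  have hr : Tendsto (fun x : ℝ => Real.exp (-(1/2) * x)) atTop (nhds 0) := by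
    apply Real.tendsto_exp_atBot.comp
    exact Filter.Tendsto.const_mul_atTop_of_neg (by norm_num) tendsto_id
  have h2 : Tendsto (fun x : ℝ => x ^ (1:ℝ) * Real.exp (-(1/2) * x ^ 2)) atTop (nhds 0) :=
    h.tendsto_zero_of_tendsto hr
  have h3 : Tendsto (fun x : ℝ => x * Real.exp (-x ^ 2 / 2)) atTop (nhds 0) := by
    apply h2.congr'
    filter_upwards [eventually_ge_atTop (0:ℝ)] with x hx
    rw [Real.rpow_one]
    ring_nf
  have h4 : Tendsto (fun x : ℝ => c * Real.exp (-x ^ 2 / 2)) atTop (nhds 0) := by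
    simpa using tendsto_exp_neg_sq.const_mul c
  have h5 := h3.sub h4
  rw [sub_zero] at h5
  exact h5.congr (fun x => by ring)

/-- Key tail bound via integration by parts. -/
lemma tail_bound (t : ℝ) (ht : 0 < t) :
    ∫ x in Ioi t, (x - t) ^ 2 * Real.exp (-x ^ 2 / 2) ≤ (1 / t) * Real.exp (-t ^ 2 / 2) := by
  set F : ℝ → ℝ := fun x => -(x - t) * Real.exp (-x ^ 2 / 2) - (1 / t) * Real.exp (-x ^ 2 / 2)
    with hF
  set F' : ℝ → ℝ := fun x => Real.exp (-x ^ 2 / 2) * ((x - t) * x + x / t - 1) with hF'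
  have hderiv : ∀ x, HasDerivAt F (F' x) x := by
    intro x
    have he := hasDerivAt_exp_neg_sq x
    have h1 : HasDerivAt (fun y : ℝ => -(y - t)) (-1) x := by
      exact ((hasDerivAt_id x).sub_const t).neg
    have h2 := h1.mul he
    have h3 := (he.const_mul (1 / t))
    have := h2.sub h3
    apply this.congr_deriv
    simp only [hF']
    field_simp
    ring
  have hpos : ∀ x ∈ Ioi t, 0 ≤ F' x := by
    intro x hx
    simp only [mem_Ioi] at hx
    have hx0 : 0 < x := lt_trans ht hx
    apply mul_nonneg (Real.exp_nonneg _)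
    have h1 : (1:ℝ) ≤ x / t := (one_le_div ht).mpr hx.le
    nlinarith
  have htend : Tendsto F atTop (nhds 0) := by
    have h1 := tendsto_mul_exp_neg_sq t
    have h2 : Tendsto (fun x : ℝ => (1 / t) * Real.exp (-x ^ 2 / 2)) atTop (nhds 0) := by
      simpa using tendsto_exp_neg_sq.const_mul (1 / t)
    have h5 := (h1.neg).sub h2
    simpa using h5.congr (fun x => by rw [hF]; ring)
  have hint : ∫ x in Ioi t, F' x = 0 - F t :=
    integral_Ioi_of_hasDerivAt_of_nonneg (hderiv t).continuousAt.continuousWithinAt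
      (fun x _ => hderiv x) hpos htend
  have hFt : 0 - F t = (1 / t) * Real.exp (-t ^ 2 / 2) := by
    rw [hF]; ring
  have hintF' : IntegrableOn F' (Ioi t) :=
    integrableOn_Ioi_deriv_of_nonneg (hderiv t).continuousAt.continuousWithinAt
      (fun x _ => hderiv x) hpos htend
  have hle : ∀ x ∈ Ioi t, (x - t) ^ 2 * Real.exp (-x ^ 2 / 2) ≤ F' x := by
    intro x hx
    simp only [mem_Ioi] at hx
    have h1 : (1:ℝ) ≤ x / t := (one_le_div ht).mpr hx.le
    have he : 0 < Real.exp (-x ^ 2 / 2) := Real.exp_pos _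
    simp only [hF']
    rw [mul_comm ((x - t) ^ 2)]
    apply mul_le_mul_of_nonneg_left _ he.le
    nlinarith [mul_nonneg (sub_pos.mpr hx).le ht.le]
  have hintg : IntegrableOn (fun x => (x - t) ^ 2 * Real.exp (-x ^ 2 / 2)) (Ioi t) := by
    apply Integrable.mono' hintF'
    · apply AEStronglyMeasurable.restrict
      exact (((measurable_id.sub_const t).pow_const 2).mul
        ((measurable_id.pow_const 2).neg.div_const 2).exp).aestronglyMeasurable
    · filter_upwards [ae_restrict_mem measurableSet_Ioi] with x hx
      rw [Real.norm_eq_abs, abs_of_nonneg (mul_nonneg (sq_nonneg _) (Real.exp_nonneg _))]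
      exact hle x hx
  calc ∫ x in Ioi t, (x - t) ^ 2 * Real.exp (-x ^ 2 / 2)
      ≤ ∫ x in Ioi t, F' x := setIntegral_mono_on hintg hintF' measurableSet_Ioi hle
    _ = (1 / t) * Real.exp (-t ^ 2 / 2) := by rw [hint, hFt]

/-- For a standard Gaussian `g ∼ N(0,1)` and `t > 0`,
`E[shrink(g,t)²] ≤ (2/√(2π)) (1/t) exp(-t²/2)`. -/
theorem expected_sq_shrink_le (t : ℝ) (ht : 0 < t) :
    ∫ g, (shrink g t) ^ 2 ∂(gaussianReal 0 1) ≤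
      (2 / Real.sqrt (2 * π)) * (1 / t) * Real.exp (-t ^ 2 / 2) := by
  -- rewrite Gaussian integral as a Lebesgue integral
  have hmeas : Measurable (fun x : ℝ => (gaussianPDFReal 0 1 x).toNNReal) :=
    (measurable_gaussianPDFReal 0 1).real_toNNReal
  have hrw : ∫ g, (shrink g t) ^ 2 ∂(gaussianReal 0 1)
      = ∫ x, gaussianPDFReal 0 1 x * (shrink x t) ^ 2 := by
    rw [gaussianReal_of_var_ne_zero 0 one_ne_zero]
    have : (gaussianPDF 0 1) = fun x => ((gaussianPDFReal 0 1 x).toNNReal : ℝ≥0∞) := rfl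
    rw [this, integral_withDensity_eq_integral_smul hmeas]
    congr 1
    ext x
    rw [NNReal.smul_def, Real.coe_toNNReal _ (gaussianPDFReal_nonneg 0 1 x)]
    rfl
  have hpdf : ∀ x, gaussianPDFReal 0 1 x
      = (Real.sqrt (2 * π))⁻¹ * Real.exp (-x ^ 2 / 2) := by
    intro x
    simp only [gaussianPDFReal]
    norm_num
  rw [hrw]
  simp_rw [fun x => hpdf x, mul_assoc]
  rw [integral_const_mul]
  have key : ∫ x, Real.exp (-x ^ 2 / 2) * (shrink x t) ^ 2
      ≤ 2 * ((1 / t) * Real.exp (-t ^ 2 / 2)) := by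
    set g1 : ℝ → ℝ := fun x => (x + t) ^ 2 * Real.exp (-x ^ 2 / 2) with hg1
    set g2 : ℝ → ℝ := fun x => (x - t) ^ 2 * Real.exp (-x ^ 2 / 2) with hg2
    have hsplit : ∀ x, Real.exp (-x ^ 2 / 2) * (shrink x t) ^ 2
        = (Iio (-t)).indicator g1 x + (Ioi t).indicator g2 x := by
      intro x
      unfold shrink
      rcases lt_trichotomy x (-t) with h | h | h
      · rw [indicator_of_mem (mem_Iio.mpr h), indicator_of_notMem (by simp only [mem_Ioi]; linarith)]
        rw [if_pos h, hg1]; ring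
      · rw [indicator_of_notMem (by simp [h]), indicator_of_notMem
          (by simp only [mem_Ioi]; linarith)]
        rw [if_neg (by linarith), if_pos (by linarith)]; ring
      · rw [indicator_of_notMem (by simp only [mem_Iio]; linarith)]
        by_cases h2 : x ≤ t
        · rw [indicator_of_notMem (by simpa using h2), if_neg (by linarith), if_pos h2]; ring
        · push_neg at h2
          rw [indicator_of_mem (mem_Ioi.mpr h2), if_neg (by linarith), if_neg (by linarith), hg2]; ring
    have hdom : Integrable (fun x : ℝ => x ^ 2 * Real.exp (-(1/2) * x ^ 2)) := by
      have := integrable_rpow_mul_exp_neg_mul_sq (b := 1/2) (by norm_num) (s := 2) (by norm_num)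
      apply this.congr
      filter_upwards with x
      rw [show (2:ℝ) = ((2:ℕ):ℝ) by norm_num, Real.rpow_natCast]
    have hexp : ∀ x : ℝ, Real.exp (-x ^ 2 / 2) = Real.exp (-(1/2) * x ^ 2) := by
      intro x; ring_nf
    have hind1 : Integrable ((Iio (-t)).indicator g1) := by
      apply hdom.mono'
      · exact ((((measurable_id.add_const t).pow_const 2).mul
          ((measurable_id.pow_const 2).neg.div_const 2).exp).indicator
          measurableSet_Iio).aestronglyMeasurable
      · filter_upwards with x
        rw [Real.norm_eq_abs]
        by_cases hx : x ∈ Iio (-t)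
        · rw [indicator_of_mem hx, abs_of_nonneg (mul_nonneg (sq_nonneg _) (Real.exp_nonneg _)),
            ← hexp]
          simp only [mem_Iio] at hx
          have : (x + t) ^ 2 ≤ x ^ 2 := by nlinarith
          exact mul_le_mul_of_nonneg_right this (Real.exp_nonneg _)
        · rw [indicator_of_notMem hx]
          simp only [abs_zero]
          positivity
    have hind2 : Integrable ((Ioi t).indicator g2) := by
      apply hdom.mono'
      · exact ((((measurable_id.sub_const t).pow_const 2).mul
          ((measurable_id.pow_const 2).neg.div_const 2).exp).indicator
          measurableSet_Ioi).aestronglyMeasurable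
      · filter_upwards with x
        rw [Real.norm_eq_abs]
        by_cases hx : x ∈ Ioi t
        · rw [indicator_of_mem hx, abs_of_nonneg (mul_nonneg (sq_nonneg _) (Real.exp_nonneg _)),
            ← hexp]
          simp only [mem_Ioi] at hx
          have : (x - t) ^ 2 ≤ x ^ 2 := by nlinarith
          exact mul_le_mul_of_nonneg_right this (Real.exp_nonneg _)
        · rw [indicator_of_notMem hx]
          simp only [abs_zero]
          positivity
    calc ∫ x, Real.exp (-x ^ 2 / 2) * (shrink x t) ^ 2
        = ∫ x, ((Iio (-t)).indicator g1 x + (Ioi t).indicator g2 x) := by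
          exact integral_congr_ae (Filter.Eventually.of_forall hsplit)
      _ = (∫ x, (Iio (-t)).indicator g1 x) + ∫ x, (Ioi t).indicator g2 x :=
          integral_add hind1 hind2
      _ = (∫ x in Iio (-t), g1 x) + ∫ x in Ioi t, g2 x := by
          rw [integral_indicator measurableSet_Iio, integral_indicator measurableSet_Ioi]
      _ = (∫ x in Ioi t, g2 x) + ∫ x in Ioi t, g2 x := by
          congr 1
          rw [← integral_Iic_eq_integral_Iio]
          rw [show (∫ x in Iic (-t), g1 x) = ∫ x in Iic (-t), g2 (-x) from
            setIntegral_congr_fun measurableSet_Iic (fun x _ => by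
              simp only [hg1, hg2]; ring_nf)]
          rw [integral_comp_neg_Iic, neg_neg]
      _ = 2 * ∫ x in Ioi t, g2 x := by ring
      _ ≤ 2 * ((1 / t) * Real.exp (-t ^ 2 / 2)) := by
          have := tail_bound t ht
          linarith
  refine le_trans (mul_le_mul_of_nonneg_left key (by positivity)) (le_of_eq (by ring))
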